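/- arXiv:1707.05852 — 3 statements merged into one kernel-verified Lean document; each statement's English description precedes it below -/
import Mathlib

section
/- For every ε > 0 there exists a(ε) > 0 such that for all a, b ∈ ℝⁿ with max(‖a‖, ‖b‖) > a(ε), the two-estimator cost satisfies J(a, b) > J_MS − ε. -/
open MeasureTheory

section Aux

variable {n : ℕ} (μ : Measure (EuclideanSpace ℝ (Fin n))) [IsProbabilityMeasure μ]

lemma aux_integrable_norm (hmom : Integrable (fun x => ‖x‖ ^ 2) μ) :
    Integrable (fun x : EuclideanSpace ℝ (Fin n) => ‖x‖) μ := by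
  refine ((integrable_const (1:ℝ)).add hmom).mono
    (continuous_norm.aestronglyMeasurable) (Filter.Eventually.of_forall fun x => ?_)
  have h1 : ‖x‖ ≤ 1 + ‖x‖ ^ 2 := by nlinarith [norm_nonneg x, sq_nonneg (‖x‖ - 1)]
  rw [Real.norm_eq_abs, Real.norm_eq_abs, abs_of_nonneg (norm_nonneg x)]
  exact h1.trans (le_abs_self _)

lemma aux_integrable_id (hmom : Integrable (fun x => ‖x‖ ^ 2) μ) :
    Integrable (fun x : EuclideanSpace ℝ (Fin n) => x) μ :=
  ⟨aestronglyMeasurable_id, (hasFiniteIntegral_norm_iff _).1 (aux_integrable_norm μ hmom).2⟩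

lemma aux_integrable_sub_sq (hmom : Integrable (fun x => ‖x‖ ^ 2) μ)
    (b : EuclideanSpace ℝ (Fin n)) :
    Integrable (fun x => ‖b - x‖ ^ 2) μ := by
  have hg : Integrable (fun x : EuclideanSpace ℝ (Fin n) =>
      ‖b‖ ^ 2 + 2 * ‖b‖ * ‖x‖ + ‖x‖ ^ 2) μ :=
    ((integrable_const _).add ((aux_integrable_norm μ hmom).const_mul _)).add hmom
  refine hg.mono (((continuous_const.sub continuous_id).norm.pow 2).aestronglyMeasurable)
    (Filter.Eventually.of_forall fun x => ?_)
  have h1 : ‖b - x‖ ≤ ‖b‖ + ‖x‖ := norm_sub_le _ _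
  have h2 : ‖b - x‖ ^ 2 ≤ ‖b‖ ^ 2 + 2 * ‖b‖ * ‖x‖ + ‖x‖ ^ 2 := by
    nlinarith [norm_nonneg (b - x), norm_nonneg b, norm_nonneg x]
  rw [Real.norm_eq_abs, Real.norm_eq_abs, abs_of_nonneg (by positivity : (0:ℝ) ≤ ‖b - x‖ ^ 2)]
  exact h2.trans (le_abs_self _)

lemma aux_integrable_min (hmom : Integrable (fun x => ‖x‖ ^ 2) μ)
    (a b : EuclideanSpace ℝ (Fin n)) :
    Integrable (fun x => min (‖a - x‖ ^ 2) (‖b - x‖ ^ 2)) μ := by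
  refine (aux_integrable_sub_sq μ hmom a).mono
    ((((continuous_const.sub continuous_id).norm.pow 2).min
      ((continuous_const.sub continuous_id).norm.pow 2)).aestronglyMeasurable)
    (Filter.Eventually.of_forall fun x => ?_)
  rw [Real.norm_eq_abs, Real.norm_eq_abs,
    abs_of_nonneg (le_min (by positivity) (by positivity) :
      (0:ℝ) ≤ min (‖a - x‖ ^ 2) (‖b - x‖ ^ 2))]
  exact (min_le_left _ _).trans (le_abs_self _)

lemma aux_expand (hmom : Integrable (fun x => ‖x‖ ^ 2) μ)
    (c : EuclideanSpace ℝ (Fin n)) :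
    ∫ x, ‖c - x‖ ^ 2 ∂μ
      = ‖c‖ ^ 2 - 2 * (inner ℝ c (∫ y, y ∂μ) : ℝ) + ∫ x, ‖x‖ ^ 2 ∂μ := by
  have hin : Integrable (fun x : EuclideanSpace ℝ (Fin n) => (inner ℝ c x : ℝ)) μ :=
    (aux_integrable_id μ hmom).const_inner c
  have h1 : (fun x : EuclideanSpace ℝ (Fin n) => ‖c - x‖ ^ 2)
      = fun x => ‖c‖ ^ 2 - 2 * (inner ℝ c x : ℝ) + ‖x‖ ^ 2 :=
    funext fun x => norm_sub_sq_real c x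
  have hint1 : Integrable (fun x : EuclideanSpace ℝ (Fin n) =>
      ‖c‖ ^ 2 - 2 * (inner ℝ c x : ℝ)) μ := (integrable_const _).sub (hin.const_mul 2)
  rw [h1, integral_add hint1 hmom,
    integral_sub (integrable_const (‖c‖ ^ 2)) (hin.const_mul 2), integral_const,
    integral_const_mul, integral_inner (aux_integrable_id μ hmom) c]
  simp

lemma aux_bias (hmom : Integrable (fun x => ‖x‖ ^ 2) μ)
    (b : EuclideanSpace ℝ (Fin n)) :
    (∫ x, ‖x - (∫ y, y ∂μ)‖ ^ 2 ∂μ) ≤ ∫ x, ‖b - x‖ ^ 2 ∂μ := by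
  set m : EuclideanSpace ℝ (Fin n) := ∫ y, y ∂μ with hm
  have hJ : (∫ x, ‖x - m‖ ^ 2 ∂μ) = ∫ x, ‖m - x‖ ^ 2 ∂μ := by
    congr 1; funext x; rw [norm_sub_rev]
  rw [hJ, aux_expand μ hmom m, aux_expand μ hmom b]
  have h1 : ‖b - m‖ ^ 2 = ‖b‖ ^ 2 - 2 * (inner ℝ b m : ℝ) + ‖m‖ ^ 2 := norm_sub_sq_real b m
  have h2 : (inner ℝ m m : ℝ) = ‖m‖ ^ 2 := real_inner_self_eq_norm_sq m
  nlinarith [sq_nonneg (‖b - m‖)]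

end Aux

set_option maxHeartbeats 2000000 in
/-- For every `ε > 0` there exists `a(ε) > 0` such that whenever
`max(‖a‖, ‖b‖) > a(ε)`, the two-estimator cost satisfies `J(a,b) > J_MS − ε`. -/
theorem cost_large_outside_ball
    (n : ℕ) (hn : 1 ≤ n)
    (μ : Measure (EuclideanSpace ℝ (Fin n))) [IsProbabilityMeasure μ]
    (hac : μ ≪ volume)
    (hmom : Integrable (fun x => ‖x‖ ^ 2) μ)
    (ε : ℝ) (hε : 0 < ε) :
    ∃ aε : ℝ, 0 < aε ∧
      ∀ a b : EuclideanSpace ℝ (Fin n), aε < max ‖a‖ ‖b‖ →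
        (∫ x, ‖x - (∫ y, y ∂μ)‖ ^ 2 ∂μ) - ε <
          ∫ x, min (‖a - x‖ ^ 2) (‖b - x‖ ^ 2) ∂μ := by
  classical
  set m : EuclideanSpace ℝ (Fin n) := ∫ y, y ∂μ with hm
  set J : ℝ := ∫ x, ‖x - m‖ ^ 2 ∂μ with hJdef
  have hJ0 : 0 ≤ J := integral_nonneg fun x => by positivity
  set S : ℝ := ∫ x, ‖x‖ ^ 2 ∂μ with hSdef
  set δ : ℝ := min (ε / (12 + 4 * J)) (1 / (2 * (J + 1))) with hδdef
  have hδ0 : 0 < δ := lt_min (by positivity) (by positivity)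
  -- choose a radius k with small tail second moment
  have hball : ∀ k : ℕ, MeasurableSet (Metric.closedBall (0 : EuclideanSpace ℝ (Fin n)) k) :=
    fun k => Metric.isClosed_closedBall.measurableSet
  have hunion : (⋃ k : ℕ, Metric.closedBall (0 : EuclideanSpace ℝ (Fin n)) k) = Set.univ := by
    refine Set.eq_univ_of_forall fun x => Set.mem_iUnion.2 ?_
    obtain ⟨k, hk⟩ := exists_nat_ge ‖x‖
    exact ⟨k, by simpa [Metric.mem_closedBall, dist_zero_right] using hk⟩
  have htend : Filter.Tendsto
      (fun k : ℕ => ∫ x in Metric.closedBall (0 : EuclideanSpace ℝ (Fin n)) k, ‖x‖ ^ 2 ∂μ)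
      Filter.atTop (nhds S) := by
    have := tendsto_setIntegral_of_monotone hball
      (fun i j hij => Metric.closedBall_subset_closedBall (by exact_mod_cast hij))
      (by rw [hunion]; exact hmom.integrableOn)
    rwa [hunion, setIntegral_univ] at this
  have hev : ∀ᶠ k : ℕ in Filter.atTop,
      S - (∫ x in Metric.closedBall (0 : EuclideanSpace ℝ (Fin n)) k, ‖x‖ ^ 2 ∂μ) < δ := by
    have h2 : Filter.Tendsto
        (fun k : ℕ => S - ∫ x in Metric.closedBall (0 : EuclideanSpace ℝ (Fin n)) k, ‖x‖ ^ 2 ∂μ)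
        Filter.atTop (nhds (S - S)) := Filter.Tendsto.sub tendsto_const_nhds htend
    rw [sub_self] at h2
    exact h2.eventually_lt_const hδ0
  obtain ⟨k, hkδ, hk1⟩ := (hev.and (Filter.eventually_ge_atTop 1)).exists
  -- notation: B = closed ball, T = tail
  set B : Set (EuclideanSpace ℝ (Fin n)) := Metric.closedBall 0 k with hBdef
  set T : Set (EuclideanSpace ℝ (Fin n)) := Bᶜ with hTdef
  have hBmeas : MeasurableSet B := hball k
  have hTmeas : MeasurableSet T := hBmeas.compl
  have hmemB : ∀ x, x ∈ B ↔ ‖x‖ ≤ (k : ℝ) := fun x => by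
    simp [hBdef, Metric.mem_closedBall, dist_zero_right]
  have hmemT : ∀ x, x ∈ T ↔ (k : ℝ) < ‖x‖ := fun x => by
    simp [hTdef, hmemB x, not_le]
  set f : ℝ := ∫ x in T, ‖x‖ ^ 2 ∂μ with hfdef
  set t : ℝ := (μ T).toReal with htdef
  have ht0 : 0 ≤ t := ENNReal.toReal_nonneg
  have hf0 : 0 ≤ f := setIntegral_nonneg hTmeas fun x _ => by positivity
  have hsplit : (∫ x in B, ‖x‖ ^ 2 ∂μ) + f = S := integral_add_compl hBmeas hmom
  have hfδ : f < δ := by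
    have := hkδ
    linarith
  have hR1 : (1 : ℝ) ≤ (k : ℝ) := by exact_mod_cast hk1
  -- Chebyshev
  have hcheb : (k : ℝ) ^ 2 * t ≤ f := by
    refine setIntegral_ge_of_const_le_real hTmeas (measure_ne_top μ T) (fun x hx => ?_)
      hmom.integrableOn
    have hx' := (hmemT x).1 hx
    nlinarith [norm_nonneg x]
  have htf : t ≤ f := by
    nlinarith [mul_nonneg (by nlinarith : (0:ℝ) ≤ (k:ℝ) ^ 2 - 1) ht0]
  have hμB : (μ B).toReal = 1 - t := by
    have h1 : μ T = 1 - μ B := prob_compl_eq_one_sub hBmeas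
    have h2 : μ B ≤ 1 := prob_le_one
    have h3 : t = 1 - (μ B).toReal := by
      rw [htdef, h1, ENNReal.toReal_sub_of_le h2 ENNReal.one_ne_top, ENNReal.toReal_one]
    linarith
  set L : ℝ := Real.sqrt (J + 1) with hLdef
  have hL0 : 0 ≤ L := Real.sqrt_nonneg _
  have hL2 : L ^ 2 = J + 1 := Real.sq_sqrt (by linarith)
  set aeps : ℝ := 3 * (k : ℝ) + L with haepsdef
  have haeps0 : 0 < aeps := by linarith
  have hδ1 : δ ≤ ε / (12 + 4 * J) := min_le_left _ _
  have hδ2 : δ ≤ 1 / (2 * (J + 1)) := min_le_right _ _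
  have key : ∀ a b : EuclideanSpace ℝ (Fin n), aeps < ‖a‖ →
      J - ε < ∫ x, min (‖a - x‖ ^ 2) (‖b - x‖ ^ 2) ∂μ := by
    intro a b ha
    have hsetle : ∫ x in B, min (‖a - x‖ ^ 2) (‖b - x‖ ^ 2) ∂μ
        ≤ ∫ x, min (‖a - x‖ ^ 2) (‖b - x‖ ^ 2) ∂μ :=
      setIntegral_le_integral (aux_integrable_min μ hmom a b)
        (Filter.Eventually.of_forall fun x => le_min (by positivity) (by positivity))
    by_cases hb : ‖b‖ ≤ (k : ℝ) + L
    · -- near case: on B, ‖a - x‖ ≥ ‖b - x‖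
      have hpt : ∀ x ∈ B, ‖b - x‖ ^ 2 ≤ min (‖a - x‖ ^ 2) (‖b - x‖ ^ 2) := by
        intro x hx
        have hxk : ‖x‖ ≤ (k : ℝ) := (hmemB x).1 hx
        have h1 : ‖b - x‖ ≤ 2 * (k : ℝ) + L := (norm_sub_le _ _).trans (by linarith)
        have h2 : 2 * (k : ℝ) + L ≤ ‖a - x‖ := by
          have := norm_sub_norm_le a x
          linarith
        exact le_min (pow_le_pow_left₀ (norm_nonneg _) (h1.trans h2) 2) le_rfl
      have h3 : ∫ x in B, ‖b - x‖ ^ 2 ∂μ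
          ≤ ∫ x in B, min (‖a - x‖ ^ 2) (‖b - x‖ ^ 2) ∂μ :=
        setIntegral_mono_on (aux_integrable_sub_sq μ hmom b).integrableOn
          (aux_integrable_min μ hmom a b).integrableOn hBmeas hpt
      have h4 : (∫ x in B, ‖b - x‖ ^ 2 ∂μ) + (∫ x in T, ‖b - x‖ ^ 2 ∂μ)
          = ∫ x, ‖b - x‖ ^ 2 ∂μ := integral_add_compl hBmeas (aux_integrable_sub_sq μ hmom b)
      have h5 : J ≤ ∫ x, ‖b - x‖ ^ 2 ∂μ := aux_bias μ hmom b
      -- tail bound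
      have hgT : Integrable (fun x : EuclideanSpace ℝ (Fin n) =>
          2 * ‖b‖ ^ 2 + 2 * ‖x‖ ^ 2) μ := (integrable_const _).add (hmom.const_mul 2)
      have h6 : ∫ x in T, ‖b - x‖ ^ 2 ∂μ ≤ ∫ x in T, (2 * ‖b‖ ^ 2 + 2 * ‖x‖ ^ 2) ∂μ := by
        refine setIntegral_mono_on (aux_integrable_sub_sq μ hmom b).integrableOn
          hgT.integrableOn hTmeas (fun x _ => ?_)
        nlinarith [pow_le_pow_left₀ (norm_nonneg (b - x)) (norm_sub_le b x) 2,
          sq_nonneg (‖b‖ - ‖x‖)]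
      have h7 : ∫ x in T, (2 * ‖b‖ ^ 2 + 2 * ‖x‖ ^ 2) ∂μ = 2 * ‖b‖ ^ 2 * t + 2 * f := by
        have e1 : ∫ x in T, (2 * ‖b‖ ^ 2 + 2 * ‖x‖ ^ 2) ∂μ
            = (∫ _x in T, (2 * ‖b‖ ^ 2 : ℝ) ∂μ) + ∫ x in T, 2 * ‖x‖ ^ 2 ∂μ :=
          integral_add (integrable_const _).integrableOn ((hmom.const_mul 2).integrableOn)
        rw [e1, setIntegral_const, measureReal_def, integral_const_mul, smul_eq_mul, ← htdef, ← hfdef]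
        ring
      have hb2 : ‖b‖ ^ 2 ≤ 2 * (k : ℝ) ^ 2 + 2 * (J + 1) := by
        nlinarith [sq_nonneg ((k : ℝ) - L), pow_le_pow_left₀ (norm_nonneg b) hb 2, hL2]
      have h8 : ∫ x in T, ‖b - x‖ ^ 2 ∂μ ≤ (10 + 4 * J) * f := by
        have h9 : 2 * ‖b‖ ^ 2 * t ≤ (4 * (k : ℝ) ^ 2 + 4 * (J + 1)) * t := by nlinarith
        have h10 : (4 * (k : ℝ) ^ 2) * t ≤ 4 * f := by linarith [hcheb]
        have h11 : (4 * (J + 1)) * t ≤ 4 * (J + 1) * f := by nlinarith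
        nlinarith [h6, h7]
      have h12 : (10 + 4 * J) * f < ε := by
        have h13 : (10 + 4 * J) * f < (10 + 4 * J) * δ := by nlinarith
        have h14 : (10 + 4 * J) * δ ≤ (10 + 4 * J) * (ε / (12 + 4 * J)) := by nlinarith
        have h15 : (10 + 4 * J) * (ε / (12 + 4 * J)) < ε := by
          have h120 : (0:ℝ) < 12 + 4 * J := by linarith
          rw [← mul_div_assoc, div_lt_iff₀ h120]
          nlinarith
        linarith
      linarith
    · -- far case: both are far, min ≥ J + 1 on B
      push_neg at hb
      have hpt : ∀ x ∈ B, J + 1 ≤ min (‖a - x‖ ^ 2) (‖b - x‖ ^ 2) := by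
        intro x hx
        have hxk : ‖x‖ ≤ (k : ℝ) := (hmemB x).1 hx
        have h1 : L ≤ ‖a - x‖ := by
          have := norm_sub_norm_le a x
          linarith
        have h2 : L ≤ ‖b - x‖ := by
          have := norm_sub_norm_le b x
          linarith
        refine le_min ?_ ?_ <;> nlinarith
      have h3 : (J + 1) * (μ B).toReal
          ≤ ∫ x in B, min (‖a - x‖ ^ 2) (‖b - x‖ ^ 2) ∂μ :=
        setIntegral_ge_of_const_le_real hBmeas (measure_ne_top μ B) hpt
          (aux_integrable_min μ hmom a b).integrableOn
      rw [hμB] at h3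
      have h4 : (J + 1) * t < 1 + ε := by
        have : (J + 1) * t ≤ (J + 1) * δ := by nlinarith
        have h5 : (J + 1) * δ ≤ (J + 1) * (1 / (2 * (J + 1))) := by nlinarith
        have h6 : (J + 1) * (1 / (2 * (J + 1))) = 1 / 2 := by
          have hJ1 : J + 1 ≠ 0 := by linarith
          field_simp
        nlinarith
      nlinarith [hsetle, h3]
  refine ⟨aeps, haeps0, fun a b hmax => ?_⟩
  rcases lt_max_iff.mp hmax with h | h
  · exact key a b h
  · have hcomm : (∫ x, min (‖b - x‖ ^ 2) (‖a - x‖ ^ 2) ∂μ)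
        = ∫ x, min (‖a - x‖ ^ 2) (‖b - x‖ ^ 2) ∂μ := by
      congr 1; funext x; exact min_comm _ _
    have := key b a h
    rwa [hcomm] at this
end

section
/- There exists b₀ > 0 such that for every b ≥ b₀, the two-estimator cost J attains a minimum on the set S_b := {(a, c) ∈ ℝⁿ × ℝⁿ : max(‖a‖, ‖c‖) ≤ b}, i.e. there is (a*, c*) ∈ S_b with J(a*, c*) ≤ J(a, c) for all (a, c) ∈ S_b, and the minimal value satisfies J(a*, c*) < J_MS. -/
open MeasureTheory

section Aux
open RealInnerProductSpace

set_option linter.unusedSectionVars false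

variable {n : ℕ} {μ : Measure (EuclideanSpace ℝ (Fin n))} [IsProbabilityMeasure μ]

lemma integrable_sq_dist (hmom : Integrable (fun x => ‖x‖ ^ 2) μ)
    (a : EuclideanSpace ℝ (Fin n)) : Integrable (fun x => ‖a - x‖ ^ 2) μ := by
  have hmeas : AEStronglyMeasurable (fun x : EuclideanSpace ℝ (Fin n) => ‖a - x‖ ^ 2) μ :=
    (Continuous.aestronglyMeasurable (by fun_prop))
  refine Integrable.mono (g := fun x => 2 * ‖a‖ ^ 2 + 2 * ‖x‖ ^ 2)
    ((integrable_const _).add (hmom.const_mul 2)) hmeas ?_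
  filter_upwards with x
  have h1 : ‖a - x‖ ≤ ‖a‖ + ‖x‖ := norm_sub_le _ _
  have h3 : ‖a - x‖ ^ 2 ≤ (‖a‖ + ‖x‖) ^ 2 := pow_le_pow_left₀ (norm_nonneg _) h1 2
  rw [Real.norm_eq_abs, abs_of_nonneg (by positivity), Real.norm_eq_abs,
    abs_of_nonneg (by positivity)]
  nlinarith [sq_nonneg (‖a‖ - ‖x‖)]

lemma integrable_min_sq (hmom : Integrable (fun x => ‖x‖ ^ 2) μ)
    (a c : EuclideanSpace ℝ (Fin n)) :
    Integrable (fun x => min (‖a - x‖ ^ 2) (‖c - x‖ ^ 2)) μ := by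
  refine Integrable.mono (integrable_sq_dist hmom a)
    (Continuous.aestronglyMeasurable (by fun_prop)) ?_
  filter_upwards with x
  rw [Real.norm_eq_abs, abs_of_nonneg (le_min (by positivity) (by positivity)),
    Real.norm_eq_abs, abs_of_nonneg (by positivity)]
  exact min_le_left _ _

lemma continuous_J (hmom : Integrable (fun x => ‖x‖ ^ 2) μ) :
    Continuous (fun p : EuclideanSpace ℝ (Fin n) × EuclideanSpace ℝ (Fin n) =>
      ∫ x, min (‖p.1 - x‖ ^ 2) (‖p.2 - x‖ ^ 2) ∂μ) := by
  rw [continuous_iff_continuousAt]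
  intro p
  set R : ℝ := max ‖p.1‖ ‖p.2‖ + 1 with hR
  refine continuousAt_of_dominated (bound := fun x => 2 * R ^ 2 + 2 * ‖x‖ ^ 2)
    (Filter.Eventually.of_forall fun q => Continuous.aestronglyMeasurable (by fun_prop)) ?_
    ((integrable_const _).add (hmom.const_mul 2))
    (Filter.Eventually.of_forall fun x => Continuous.continuousAt (by fun_prop))
  have hball : Metric.ball p 1 ∈ nhds p := Metric.ball_mem_nhds p one_pos
  filter_upwards [hball] with q hq
  filter_upwards with x
  rw [Metric.mem_ball] at hq
  have hd1 : dist q.1 p.1 < 1 :=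
    lt_of_le_of_lt (by rw [Prod.dist_eq]; exact le_max_left _ _) hq
  have hd2 : dist q.2 p.2 < 1 :=
    lt_of_le_of_lt (by rw [Prod.dist_eq]; exact le_max_right _ _) hq
  have hq1 : ‖q.1‖ ≤ R := by
    have h := norm_sub_norm_le q.1 p.1
    rw [← dist_eq_norm] at h
    have := le_max_left ‖p.1‖ ‖p.2‖
    simp only [hR]; linarith
  have hq2 : ‖q.2‖ ≤ R := by
    have h := norm_sub_norm_le q.2 p.2
    rw [← dist_eq_norm] at h
    have := le_max_right ‖p.1‖ ‖p.2‖
    simp only [hR]; linarith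
  have key : ∀ (a : EuclideanSpace ℝ (Fin n)), ‖a‖ ≤ R → ‖a - x‖ ^ 2 ≤ 2 * R ^ 2 + 2 * ‖x‖ ^ 2 := by
    intro a ha
    have h1 : ‖a - x‖ ≤ R + ‖x‖ := le_trans (norm_sub_le _ _) (by linarith)
    have h3 : ‖a - x‖ ^ 2 ≤ (R + ‖x‖) ^ 2 := pow_le_pow_left₀ (norm_nonneg _) h1 2
    nlinarith [sq_nonneg (R - ‖x‖)]
  rw [Real.norm_eq_abs, abs_of_nonneg (le_min (by positivity) (by positivity))]
  exact le_trans (min_le_left _ _) (key _ hq1)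


lemma hyperplane_null (hac : μ ≪ volume) (m e : EuclideanSpace ℝ (Fin n))
    (he : ⟪e, e⟫ = 1) : μ {x | ⟪e, x - m⟫ = 0} = 0 := by
  set s : AffineSubspace ℝ (EuclideanSpace ℝ (Fin n)) :=
    AffineSubspace.mk' m (LinearMap.ker (innerSL ℝ e).toLinearMap) with hs
  have hset : {x | ⟪e, x - m⟫ = 0} = (s : Set (EuclideanSpace ℝ (Fin n))) := by
    ext x
    simp [hs, AffineSubspace.mem_mk', LinearMap.mem_ker]
  have hne : s ≠ ⊤ := by
    intro h
    have hmem : m + e ∈ s := h ▸ AffineSubspace.mem_top ℝ _ _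
    rw [hs, AffineSubspace.mem_mk', LinearMap.mem_ker] at hmem
    have h2 : ((innerSL ℝ) e) (m + e -ᵥ m) = 1 := by
      rw [show m + e -ᵥ m = e from by rw [vsub_eq_sub]; abel]
      simpa using he
    rw [show ((innerSL ℝ) e) (m + e -ᵥ m) = 0 from hmem] at h2; exact zero_ne_one h2
  rw [hset]
  exact hac (Measure.addHaar_affineSubspace volume s hne)

-- some halfspace at positive distance has positive measure
lemma exists_halfspace (hn : 1 ≤ n) (hac : μ ≪ volume) (m : EuclideanSpace ℝ (Fin n)) :
    ∃ e : EuclideanSpace ℝ (Fin n), ⟪e, e⟫ = 1 ∧ ‖e‖ = 1 ∧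
      ∃ t : ℝ, 0 < t ∧ μ {x | t < ⟪e, x - m⟫} ≠ 0 := by
  set e₀ : EuclideanSpace ℝ (Fin n) := EuclideanSpace.single ⟨0, hn⟩ 1 with he₀
  have hnorm : ‖e₀‖ = 1 := by simp [he₀, EuclideanSpace.norm_single]
  have hinner : ⟪e₀, e₀⟫ = 1 := by
    rw [real_inner_self_eq_norm_sq, hnorm]; norm_num
  -- one of the open halfspaces has positive measure
  have hsplit : μ {x | 0 < ⟪e₀, x - m⟫} ≠ 0 ∨ μ {x | ⟪e₀, x - m⟫ < 0} ≠ 0 := by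
    by_contra h
    push_neg at h
    have huniv : (Set.univ : Set (EuclideanSpace ℝ (Fin n))) =
        {x | 0 < ⟪e₀, x - m⟫} ∪ {x | ⟪e₀, x - m⟫ < 0} ∪ {x | ⟪e₀, x - m⟫ = 0} := by
      ext x; simp only [Set.mem_univ, Set.mem_union, Set.mem_setOf_eq, true_iff]
      rcases lt_trichotomy (⟪e₀, x - m⟫ : ℝ) 0 with h | h | h
      · exact Or.inl (Or.inr h)
      · exact Or.inr h
      · exact Or.inl (Or.inl h)
    have : μ Set.univ = 0 := by
      rw [huniv]
      refine measure_union_null (measure_union_null h.1 h.2) ?_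
      exact hyperplane_null hac m e₀ hinner
    simp [measure_univ] at this
  -- reduce "open halfspace" to "halfspace at distance t"
  have key : ∀ e : EuclideanSpace ℝ (Fin n), μ {x | 0 < ⟪e, x - m⟫} ≠ 0 →
      ∃ t : ℝ, 0 < t ∧ μ {x | t < ⟪e, x - m⟫} ≠ 0 := by
    intro e hpos
    by_contra h
    push_neg at h
    apply hpos
    have hsub : {x | 0 < ⟪e, x - m⟫} ⊆ ⋃ k : ℕ, {x | 1 / (k + 1) < ⟪e, x - m⟫} := by
      intro x hx
      have hx' : (0:ℝ) < ⟪e, x - m⟫ := hx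
      obtain ⟨k, hk⟩ := exists_nat_one_div_lt hx'
      exact Set.mem_iUnion.mpr ⟨k, hk⟩
    refine measure_mono_null hsub (measure_iUnion_null fun k => h _ (by positivity))
  rcases hsplit with h | h
  · exact ⟨e₀, hinner, hnorm, key e₀ h⟩
  · refine ⟨-e₀, by simpa using hinner, by simpa using hnorm, key (-e₀) ?_⟩
    have heq : {x | 0 < ⟪-e₀, x - m⟫} = {x | ⟪e₀, x - m⟫ < 0} := by
      ext x
      simp only [Set.mem_setOf_eq, inner_neg_left]
      constructor <;> intro <;> linarith
    rw [heq]; exact h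

lemma improvement (hn : 1 ≤ n) (hac : μ ≪ volume)
    (hmom : Integrable (fun x => ‖x‖ ^ 2) μ) (m : EuclideanSpace ℝ (Fin n)) :
    ∃ c : EuclideanSpace ℝ (Fin n),
      ∫ x, min (‖m - x‖ ^ 2) (‖c - x‖ ^ 2) ∂μ < ∫ x, ‖x - m‖ ^ 2 ∂μ := by
  obtain ⟨e, hee, hen, t, ht, hA⟩ := exists_halfspace hn hac m
  set A : Set (EuclideanSpace ℝ (Fin n)) := {x | t < ⟪e, x - m⟫} with hAdef
  have hAmeas : MeasurableSet A := by
    have hcont : Continuous fun x : EuclideanSpace ℝ (Fin n) => (⟪e, x - m⟫ : ℝ) := by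
      exact (innerSL ℝ e).continuous.comp (continuous_id.sub continuous_const)
    exact measurableSet_lt measurable_const hcont.measurable
  refine ⟨m + t • e, ?_⟩
  have hsq : Integrable (fun x => ‖x - m‖ ^ 2) μ := by
    have := integrable_sq_dist hmom m
    simpa [norm_sub_rev] using this
  have hind : Integrable (A.indicator fun _ => t ^ 2) μ :=
    (integrable_const (t ^ 2)).indicator hAmeas
  have hmin : Integrable (fun x => min (‖m - x‖ ^ 2) (‖m + t • e - x‖ ^ 2)) μ :=
    integrable_min_sq hmom m _
  have hptwise : ∀ x, min (‖m - x‖ ^ 2) (‖m + t • e - x‖ ^ 2) ≤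
      ‖x - m‖ ^ 2 - A.indicator (fun _ => t ^ 2) x := by
    intro x
    by_cases hx : x ∈ A
    · rw [Set.indicator_of_mem hx]
      have hxA : t < ⟪e, x - m⟫ := hx
      have hexp : ‖m + t • e - x‖ ^ 2 = ‖m - x‖ ^ 2 - 2 * t * ⟪e, x - m⟫ + t ^ 2 := by
        have : m + t • e - x = (m - x) + t • e := by abel
        rw [this, norm_add_sq_real, real_inner_smul_right, norm_smul, real_inner_comm,
          inner_sub_right]
        simp only [Real.norm_eq_abs]
        rw [mul_pow, sq_abs, hen]
        rw [inner_sub_right]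
        ring
      have h2 : ‖m + t • e - x‖ ^ 2 ≤ ‖x - m‖ ^ 2 - t ^ 2 := by
        rw [hexp, norm_sub_rev]
        nlinarith
      exact le_trans (min_le_right _ _) h2
    · rw [Set.indicator_of_notMem hx, norm_sub_rev m x, sub_zero]
      exact min_le_left _ _
  have hle : ∫ x, min (‖m - x‖ ^ 2) (‖m + t • e - x‖ ^ 2) ∂μ ≤
      ∫ x, (‖x - m‖ ^ 2 - A.indicator (fun _ => t ^ 2) x) ∂μ :=
    integral_mono hmin (hsq.sub hind) hptwise
  have heq : ∫ x, (‖x - m‖ ^ 2 - A.indicator (fun _ => t ^ 2) x) ∂μ =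
      (∫ x, ‖x - m‖ ^ 2 ∂μ) - t ^ 2 * (μ A).toReal := by
    rw [integral_sub hsq hind, integral_indicator_const _ hAmeas]
    simp [mul_comm, measureReal_def]
  have hpos : 0 < t ^ 2 * (μ A).toReal := by
    have h1 : 0 < (μ A).toReal :=
      ENNReal.toReal_pos hA (measure_ne_top μ A)
    positivity
  rw [heq] at hle
  linarith

end Aux

set_option maxHeartbeats 1000000 in
/-- There exists `b₀ > 0` such that for every `b ≥ b₀`, the two-estimator cost `J`
attains a minimum on the set `S_b = {(a,c) : max(‖a‖,‖c‖) ≤ b}`, and the minimal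
value is strictly smaller than the MMSE `J_MS`. -/
theorem cost_attains_min_on_ball
    (n : ℕ) (hn : 1 ≤ n)
    (μ : Measure (EuclideanSpace ℝ (Fin n))) [IsProbabilityMeasure μ]
    (hac : μ ≪ volume)
    (hmom : Integrable (fun x => ‖x‖ ^ 2) μ) :
    ∃ b₀ : ℝ, 0 < b₀ ∧
      ∀ b : ℝ, b₀ ≤ b →
        ∃ astar cstar : EuclideanSpace ℝ (Fin n),
          max ‖astar‖ ‖cstar‖ ≤ b ∧
          (∀ a c : EuclideanSpace ℝ (Fin n), max ‖a‖ ‖c‖ ≤ b →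
            ∫ x, min (‖astar - x‖ ^ 2) (‖cstar - x‖ ^ 2) ∂μ ≤
              ∫ x, min (‖a - x‖ ^ 2) (‖c - x‖ ^ 2) ∂μ) ∧
          ∫ x, min (‖astar - x‖ ^ 2) (‖cstar - x‖ ^ 2) ∂μ <
            ∫ x, ‖x - (∫ y, y ∂μ)‖ ^ 2 ∂μ := by
  set m : EuclideanSpace ℝ (Fin n) := ∫ y, y ∂μ with hm
  obtain ⟨c, hc⟩ := improvement hn hac hmom m
  refine ⟨‖m‖ + ‖c‖ + 1, by positivity, ?_⟩
  intro b hb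
  set S := Metric.closedBall ((0, 0) : EuclideanSpace ℝ (Fin n) × EuclideanSpace ℝ (Fin n)) b
    with hS
  have hSK : IsCompact S := isCompact_closedBall _ _
  have hmemS : ∀ p : EuclideanSpace ℝ (Fin n) × EuclideanSpace ℝ (Fin n),
      p ∈ S ↔ max ‖p.1‖ ‖p.2‖ ≤ b := by
    intro p
    rw [hS, Metric.mem_closedBall, Prod.dist_eq]
    simp [dist_eq_norm]
  have hmc : (m, c) ∈ S := by
    rw [hmemS]
    have h1 : ‖m‖ ≤ b := by have := norm_nonneg c; linarith
    have h2 : ‖c‖ ≤ b := by have := norm_nonneg m; linarith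
    exact max_le h1 h2
  obtain ⟨p, hpS, hpmin⟩ := hSK.exists_isMinOn ⟨(m, c), hmc⟩ (continuous_J hmom).continuousOn
  rw [isMinOn_iff] at hpmin
  refine ⟨p.1, p.2, (hmemS p).mp hpS, ?_, ?_⟩
  · intro a c' h
    have := hpmin (a, c') ((hmemS (a, c')).mpr h)
    simpa using this
  · have := hpmin (m, c) hmc
    simp only at this
    exact lt_of_le_of_lt this hc
end

section
/- Let χ* be the unique positive real solution of φ(χ) = 2χ(1 − Φ(χ)). Then the function b ↦ J(m, b) attains its global minimum over ℝ exactly at b = m + 2χ*σ and b = m − 2χ*σ, and the minimal value is J(m, m + 2χ*σ) = σ²(1 − 2χ* φ(χ*)), which is strictly less than σ². -/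
open MeasureTheory ProbabilityTheory

/-- The standard normal probability density function. -/
noncomputable def stdGaussianPDF (x : ℝ) : ℝ :=
  Real.exp (-x ^ 2 / 2) / Real.sqrt (2 * Real.pi)

/-- The standard normal cumulative distribution function. -/
noncomputable def stdGaussianCDF (x : ℝ) : ℝ :=
  ∫ t in Set.Iic x, stdGaussianPDF t

open Real Set Filter
open scoped ENNReal NNReal

set_option linter.unusedSectionVars false

lemma sqrt2pi_pos : 0 < Real.sqrt (2 * Real.pi) := Real.sqrt_pos.2 (by positivity)

lemma stdPDF_pos (x : ℝ) : 0 < stdGaussianPDF x :=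
  div_pos (Real.exp_pos _) sqrt2pi_pos

lemma stdPDF_eq_gaussianPDFReal : stdGaussianPDF = gaussianPDFReal 0 1 := by
  funext x
  simp [stdGaussianPDF, gaussianPDFReal, div_eq_mul_inv, mul_comm]

lemma continuous_stdPDF : Continuous stdGaussianPDF := by
  unfold stdGaussianPDF; fun_prop

lemma stdPDF_exp (x : ℝ) : stdGaussianPDF x = Real.exp (-(1/2) * x ^ 2) / Real.sqrt (2 * Real.pi) := by
  unfold stdGaussianPDF; ring_nf

lemma integrable_stdPDF : Integrable stdGaussianPDF := by
  have := (integrable_exp_neg_mul_sq (by norm_num : (0:ℝ) < 1/2)).div_const (Real.sqrt (2 * Real.pi))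
  apply this.congr
  filter_upwards with x
  rw [stdPDF_exp]

lemma integrable_id_mul_stdPDF : Integrable (fun x => x * stdGaussianPDF x) := by
  have := (integrable_mul_exp_neg_mul_sq (by norm_num : (0:ℝ) < 1/2)).div_const (Real.sqrt (2 * Real.pi))
  apply this.congr
  filter_upwards with x
  rw [stdPDF_exp]; ring

lemma integrable_sq_mul_stdPDF : Integrable (fun x => x ^ 2 * stdGaussianPDF x) := by
  have h := (integrable_rpow_mul_exp_neg_mul_sq (by norm_num : (0:ℝ) < 1/2)
    (by norm_num : (-1:ℝ) < 2)).div_const (Real.sqrt (2 * Real.pi))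
  apply h.congr
  filter_upwards with x
  rw [stdPDF_exp, show ((2:ℝ) : ℝ) = ((2:ℕ) : ℝ) by norm_num, Real.rpow_natCast]
  ring

lemma integral_stdPDF : ∫ x, stdGaussianPDF x = 1 := by
  rw [stdPDF_eq_gaussianPDFReal]
  exact integral_gaussianPDFReal_eq_one 0 one_ne_zero

lemma hasDerivAt_stdPDF (x : ℝ) : HasDerivAt stdGaussianPDF (-x * stdGaussianPDF x) x := by
  have h1 : HasDerivAt (fun y : ℝ => -y ^ 2 / 2) (-x) x := by
    have := ((hasDerivAt_pow 2 x).neg).div_const 2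
    simpa using this.congr_deriv (by ring)
  have h2 := (h1.exp).div_const (Real.sqrt (2 * Real.pi))
  exact h2.congr_deriv (by unfold stdGaussianPDF; ring)

lemma tendsto_stdPDF_atTop : Tendsto stdGaussianPDF atTop (nhds 0) := by
  rw [show (0:ℝ) = 0 / Real.sqrt (2 * Real.pi) by simp]
  apply Tendsto.div_const
  apply Real.tendsto_exp_atBot.comp
  have : Tendsto (fun x : ℝ => x ^ 2 / 2) atTop atTop :=
    (tendsto_pow_atTop two_ne_zero).atTop_div_const (by norm_num)
  simpa [neg_div, Function.comp_def] using tendsto_neg_atTop_atBot.comp this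

lemma stdPDF_neg (x : ℝ) : stdGaussianPDF (-x) = stdGaussianPDF x := by
  simp [stdGaussianPDF]

lemma hasDerivAt_stdCDF (x : ℝ) : HasDerivAt stdGaussianCDF (stdGaussianPDF x) x := by
  have heq : stdGaussianCDF = fun y => stdGaussianCDF 0 + ∫ t in (0:ℝ)..y, stdGaussianPDF t := by
    funext y
    have h := intervalIntegral.integral_Iic_sub_Iic (integrable_stdPDF.integrableOn)
      (integrable_stdPDF.integrableOn) (μ := volume) (a := (0:ℝ)) (b := y)
    unfold stdGaussianCDF
    linarith
  rw [heq]
  exact (intervalIntegral.integral_hasDerivAt_right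
    integrable_stdPDF.intervalIntegrable
    continuous_stdPDF.stronglyMeasurable.stronglyMeasurableAtFilter
    continuous_stdPDF.continuousAt).const_add _

lemma continuous_stdCDF : Continuous stdGaussianCDF := by
  have : Differentiable ℝ stdGaussianCDF := fun x => (hasDerivAt_stdCDF x).differentiableAt
  exact this.continuous

lemma one_sub_stdCDF (x : ℝ) : 1 - stdGaussianCDF x = ∫ t in Set.Ioi x, stdGaussianPDF t := by
  have h := intervalIntegral.integral_Iic_add_Ioi (b := x) (integrable_stdPDF.integrableOn)
    (integrable_stdPDF.integrableOn)
  rw [integral_stdPDF] at h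
  unfold stdGaussianCDF
  linarith

lemma stdCDF_lt_one (x : ℝ) : stdGaussianCDF x < 1 := by
  have h : 0 < ∫ t in Set.Ioi x, stdGaussianPDF t := by
    rw [setIntegral_pos_iff_support_of_nonneg_ae
      (ae_of_all _ fun t => (stdPDF_pos t).le) integrable_stdPDF.integrableOn]
    have hsupp : Function.support stdGaussianPDF = Set.univ := by
      ext t; simp [Function.mem_support, (stdPDF_pos t).ne']
    rw [hsupp, Set.univ_inter]
    simp [Real.volume_Ioi]
  have := one_sub_stdCDF x
  linarith

lemma tendsto_id_mul_stdPDF_atTop : Tendsto (fun x => x * stdGaussianPDF x) atTop (nhds 0) := by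
  have h := (rpow_mul_exp_neg_mul_sq_isLittleO_exp_neg (by norm_num : (0:ℝ) < 1/2) 1)
  have hexp : Tendsto (fun x : ℝ => Real.exp (-(1/2) * x)) atTop (nhds 0) := by
    apply Real.tendsto_exp_atBot.comp
    exact (tendsto_const_mul_atBot_of_pos (by norm_num : (0:ℝ) < 1/2)).2 tendsto_neg_atTop_atBot |>.congr (by intro x; ring)
  have h0 := h.trans_tendsto hexp
  have h1 : Tendsto (fun x : ℝ => x ^ (1:ℝ) * Real.exp (-(1/2) * x ^ 2) / Real.sqrt (2 * Real.pi))
      atTop (nhds 0) := by simpa using h0.div_const (Real.sqrt (2 * Real.pi))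
  apply h1.congr'
  filter_upwards [eventually_gt_atTop (0:ℝ)] with x hx
  rw [Real.rpow_one, stdPDF_exp]; ring

lemma tendsto_id_mul_stdPDF_atBot : Tendsto (fun x => x * stdGaussianPDF x) atBot (nhds 0) := by
  have h := (tendsto_id_mul_stdPDF_atTop.comp tendsto_neg_atBot_atTop).neg
  rw [neg_zero] at h
  apply h.congr
  intro x
  simp [Function.comp, stdPDF_neg]

lemma tendsto_stdPDF_atBot : Tendsto stdGaussianPDF atBot (nhds 0) := by
  have h := tendsto_stdPDF_atTop.comp tendsto_neg_atBot_atTop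
  apply h.congr
  intro x
  simp [Function.comp, stdPDF_neg]

lemma integral_Ioi_id_mul_stdPDF (a : ℝ) :
    ∫ t in Set.Ioi a, t * stdGaussianPDF t = stdGaussianPDF a := by
  have h := integral_Ioi_of_hasDerivAt_of_tendsto' (f := fun t => -stdGaussianPDF t)
    (f' := fun t => t * stdGaussianPDF t) (a := a) (m := 0)
    (fun x _ => (hasDerivAt_stdPDF x).neg.congr_deriv (by ring))
    integrable_id_mul_stdPDF.integrableOn
    (by simpa using tendsto_stdPDF_atTop.neg)
  simpa using h

lemma integral_Ioi_sqsub_mul_stdPDF (a : ℝ) :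
    ∫ t in Set.Ioi a, (t ^ 2 - 1) * stdGaussianPDF t = a * stdGaussianPDF a := by
  have h := integral_Ioi_of_hasDerivAt_of_tendsto' (f := fun t => -(t * stdGaussianPDF t))
    (f' := fun t => (t ^ 2 - 1) * stdGaussianPDF t) (a := a) (m := 0)
    (fun x _ => ((hasDerivAt_id x).mul (hasDerivAt_stdPDF x)).neg.congr_deriv (by simp only [id_eq]; ring))
    (((integrable_sq_mul_stdPDF.sub integrable_stdPDF).congr
      (by filter_upwards with t; simp only [Pi.sub_apply]; ring)).integrableOn)
    (by simpa using tendsto_id_mul_stdPDF_atTop.neg)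
  simpa using h

lemma integral_Iic_sqsub_mul_stdPDF (a : ℝ) :
    ∫ t in Set.Iic a, (t ^ 2 - 1) * stdGaussianPDF t = -(a * stdGaussianPDF a) := by
  have h := integral_Iic_of_hasDerivAt_of_tendsto' (f := fun t => -(t * stdGaussianPDF t))
    (f' := fun t => (t ^ 2 - 1) * stdGaussianPDF t) (a := a) (m := 0)
    (fun x _ => ((hasDerivAt_id x).mul (hasDerivAt_stdPDF x)).neg.congr_deriv (by simp only [id_eq]; ring))
    (((integrable_sq_mul_stdPDF.sub integrable_stdPDF).congr
      (by filter_upwards with t; simp only [Pi.sub_apply]; ring)).integrableOn)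
    (by simpa using tendsto_id_mul_stdPDF_atBot.neg)
  simpa using h

lemma integrableOn_sqsub (s : Set ℝ) :
    IntegrableOn (fun t => (t ^ 2 - 1) * stdGaussianPDF t) s :=
  ((integrable_sq_mul_stdPDF.sub integrable_stdPDF).congr
    (by filter_upwards with t; simp only [Pi.sub_apply]; ring)).integrableOn

lemma integral_Ioi_sq_mul_stdPDF (a : ℝ) :
    ∫ t in Set.Ioi a, t ^ 2 * stdGaussianPDF t
      = (1 - stdGaussianCDF a) + a * stdGaussianPDF a := by
  have h1 : ∫ t in Set.Ioi a, t ^ 2 * stdGaussianPDF t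
      = ∫ t in Set.Ioi a, ((t ^ 2 - 1) * stdGaussianPDF t + stdGaussianPDF t) :=
    integral_congr_ae (ae_of_all _ fun t => by ring)
  rw [h1, integral_add (integrableOn_sqsub _) integrable_stdPDF.integrableOn,
    integral_Ioi_sqsub_mul_stdPDF, ← one_sub_stdCDF]
  ring

lemma integral_Iic_sq_mul_stdPDF (a : ℝ) :
    ∫ t in Set.Iic a, t ^ 2 * stdGaussianPDF t
      = stdGaussianCDF a - a * stdGaussianPDF a := by
  have h1 : ∫ t in Set.Iic a, t ^ 2 * stdGaussianPDF t
      = ∫ t in Set.Iic a, ((t ^ 2 - 1) * stdGaussianPDF t + stdGaussianPDF t) :=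
    integral_congr_ae (ae_of_all _ fun t => by ring)
  rw [h1, integral_add (integrableOn_sqsub _) integrable_stdPDF.integrableOn,
    integral_Iic_sqsub_mul_stdPDF]
  unfold stdGaussianCDF
  ring

lemma integrableOn_mills (a : ℝ) (ha : 0 < a) :
    IntegrableOn (fun t => (1 + (t⁻¹) ^ 2) * stdGaussianPDF t) (Set.Ioi a) := by
  refine Integrable.mono ((integrable_stdPDF.const_mul (1 + (a⁻¹) ^ 2)).integrableOn) ?_ ?_
  · apply Measurable.aestronglyMeasurable
    exact ((measurable_const.add ((measurable_id.inv).pow_const 2)).mul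
      continuous_stdPDF.measurable)
  · rw [ae_restrict_iff' measurableSet_Ioi]
    filter_upwards with t ht
    have ht0 : 0 < t := ha.trans ht
    have h1 : (t⁻¹) ^ 2 ≤ (a⁻¹) ^ 2 := by
      apply pow_le_pow_left₀ (by positivity)
      exact inv_anti₀ ha ht.le
    have hφ := (stdPDF_pos t).le
    rw [Real.norm_eq_abs, Real.norm_eq_abs, abs_of_nonneg (by positivity),
      abs_of_nonneg (by positivity)]
    apply mul_le_mul_of_nonneg_right (by linarith) hφ

lemma integral_Ioi_mills (a : ℝ) (ha : 0 < a) :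
    ∫ t in Set.Ioi a, (1 + (t⁻¹) ^ 2) * stdGaussianPDF t = stdGaussianPDF a / a := by
  have h := integral_Ioi_of_hasDerivAt_of_tendsto' (f := fun t => -stdGaussianPDF t / t)
    (f' := fun t => (1 + (t⁻¹) ^ 2) * stdGaussianPDF t) (a := a) (m := 0)
    (fun x hx => by
      have hx0 : x ≠ 0 := (ha.trans_le hx).ne'
      exact (((hasDerivAt_stdPDF x).neg.div (hasDerivAt_id x) hx0).congr_deriv
        (by simp only [id, Pi.neg_apply]; field_simp; ring)))
    (integrableOn_mills a ha)
    (by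
      have : Tendsto (fun t : ℝ => -stdGaussianPDF t * t⁻¹) atTop (nhds 0) := by
        simpa using tendsto_stdPDF_atTop.neg.mul tendsto_inv_atTop_zero
      apply this.congr
      intro t; rw [div_eq_mul_inv])
  rw [h]
  field_simp
  ring

lemma mills_lt (χ : ℝ) (hχ : 1 < χ) :
    stdGaussianPDF χ < 2 * χ * (1 - stdGaussianCDF χ) := by
  have hχ0 : 0 < χ := lt_trans one_pos hχ
  have hA : 0 < 1 - stdGaussianCDF χ := by linarith [stdCDF_lt_one χ]
  have hle : ∫ t in Set.Ioi χ, (1 + (t⁻¹) ^ 2) * stdGaussianPDF t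
      ≤ ∫ t in Set.Ioi χ, (1 + (χ⁻¹) ^ 2) * stdGaussianPDF t := by
    apply setIntegral_mono_on (integrableOn_mills χ hχ0)
      ((integrable_stdPDF.const_mul _).integrableOn) measurableSet_Ioi
    intro t ht
    have h1 : (t⁻¹) ^ 2 ≤ (χ⁻¹) ^ 2 := by
      apply pow_le_pow_left₀ (inv_nonneg.2 (hχ0.trans ht).le)
      exact inv_anti₀ hχ0 ht.le
    exact mul_le_mul_of_nonneg_right (by linarith) (stdPDF_pos t).le
  rw [integral_Ioi_mills χ hχ0, integral_const_mul, ← one_sub_stdCDF] at hle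
  have hkey : stdGaussianPDF χ ≤ (χ + χ⁻¹) * (1 - stdGaussianCDF χ) := by
    have := (div_le_iff₀ hχ0).mp hle
    calc stdGaussianPDF χ ≤ (1 + (χ⁻¹)^2) * (1 - stdGaussianCDF χ) * χ := this
      _ = (χ + χ⁻¹ * (χ⁻¹ * χ)) * (1 - stdGaussianCDF χ) := by ring
      _ = (χ + χ⁻¹) * (1 - stdGaussianCDF χ) := by
          rw [inv_mul_cancel₀ hχ0.ne', mul_one]
  have hlt : χ + χ⁻¹ < 2 * χ := by
    have : χ⁻¹ < 1 := inv_lt_one_of_one_lt₀ hχ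
    linarith
  calc stdGaussianPDF χ ≤ (χ + χ⁻¹) * (1 - stdGaussianCDF χ) := hkey
    _ < 2 * χ * (1 - stdGaussianCDF χ) := by
        exact mul_lt_mul_of_pos_right hlt hA

noncomputable def kfun (χ : ℝ) : ℝ :=
  2 * χ * (1 - stdGaussianCDF χ) - stdGaussianPDF χ

noncomputable def hfun (χ : ℝ) : ℝ :=
  1 - 4 * χ * stdGaussianPDF χ + 4 * χ ^ 2 * (1 - stdGaussianCDF χ)

lemma continuous_kfun : Continuous kfun := by
  unfold kfun
  exact ((continuous_const.mul continuous_id).mul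
    (continuous_const.sub continuous_stdCDF)).sub continuous_stdPDF

lemma hasDerivAt_hfun (x : ℝ) : HasDerivAt hfun (4 * kfun x) x := by
  have h1 : HasDerivAt (fun y : ℝ => 1 - 4 * y * stdGaussianPDF y
      + 4 * y ^ 2 * (1 - stdGaussianCDF y))
      (0 - (4 * stdGaussianPDF x + 4 * x * (-x * stdGaussianPDF x))
        + (4 * (2 * x) * (1 - stdGaussianCDF x) + 4 * x ^ 2 * (0 - stdGaussianPDF x))) x := by
    apply HasDerivAt.add
    · apply HasDerivAt.sub (hasDerivAt_const x 1)
      exact ((hasDerivAt_const x 4).mul (hasDerivAt_id x)).mul (hasDerivAt_stdPDF x) |>.congr_deriv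
        (by simp only [id_eq, Pi.mul_apply]; ring)
    · exact (((hasDerivAt_pow 2 x).const_mul 4).mul
        ((hasDerivAt_const x 1).sub (hasDerivAt_stdCDF x))).congr_deriv (by simp only [Pi.sub_apply]; push_cast; ring)
  exact (h1.congr_deriv (by unfold kfun; ring))

lemma kfun_zero_neg : kfun 0 < 0 := by
  unfold kfun
  simp only [mul_zero, zero_mul, zero_sub, neg_lt, neg_zero]
  exact stdPDF_pos 0

section sign
variable {χs : ℝ} (hχpos : 0 < χs)
  (hχuniq : ∀ χ : ℝ, 0 < χ →
    stdGaussianPDF χ = 2 * χ * (1 - stdGaussianCDF χ) → χ = χs)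

include hχpos hχuniq

lemma kfun_root (x : ℝ) (hx : 0 < x) (hk : kfun x = 0) : x = χs := by
  apply hχuniq x hx
  unfold kfun at hk
  linarith

lemma kfun_neg_of_lt (x : ℝ) (hx0 : 0 ≤ x) (hx : x < χs) : kfun x < 0 := by
  by_contra h
  push_neg at h
  obtain ⟨y, hy, hky⟩ := intermediate_value_Icc hx0 continuous_kfun.continuousOn
    (Set.mem_Icc.2 ⟨kfun_zero_neg.le, h⟩)
  rcases (Set.mem_Icc.1 hy).1.eq_or_lt with h0 | h0
  · rw [← h0] at hky
    exact absurd hky kfun_zero_neg.ne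
  · have := kfun_root hχpos hχuniq y h0 hky
    have hyx : y ≤ x := (Set.mem_Icc.1 hy).2
    linarith

lemma kfun_pos_of_gt (x : ℝ) (hx : χs < x) : 0 < kfun x := by
  have hx0 : 0 < x := hχpos.trans hx
  set z : ℝ := max x 1 + 1 with hz
  have hxz : x ≤ z := le_trans (le_max_left x 1) (by linarith)
  have hz1 : 1 < z := lt_of_le_of_lt (le_max_right x 1) (by linarith)
  have hkz : 0 < kfun z := by
    have := mills_lt z hz1
    unfold kfun
    linarith
  by_contra h
  push_neg at h
  obtain ⟨y, hy, hky⟩ := intermediate_value_Icc hxz continuous_kfun.continuousOn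
    (Set.mem_Icc.2 ⟨h, hkz.le⟩)
  have hy1 : x ≤ y := (Set.mem_Icc.1 hy).1
  have := kfun_root hχpos hχuniq y (hx0.trans_le hy1) hky
  linarith

end sign

section minim
variable {χs : ℝ} (hχpos : 0 < χs)
  (hχuniq : ∀ χ : ℝ, 0 < χ →
    stdGaussianPDF χ = 2 * χ * (1 - stdGaussianCDF χ) → χ = χs)

include hχpos hχuniq

lemma hfun_strict_min (x : ℝ) (hx0 : 0 ≤ x) (hne : x ≠ χs) : hfun χs < hfun x := by
  have hcont : Continuous hfun :=
    Differentiable.continuous fun y => (hasDerivAt_hfun y).differentiableAt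
  have hderiv : ∀ y, deriv hfun y = 4 * kfun y := fun y => (hasDerivAt_hfun y).deriv
  rcases lt_or_gt_of_ne hne with hlt | hgt
  · have hanti : StrictAntiOn hfun (Set.Icc 0 χs) := by
      apply strictAntiOn_of_deriv_neg (convex_Icc 0 χs) hcont.continuousOn
      intro y hy
      rw [interior_Icc] at hy
      rw [hderiv]
      have := kfun_neg_of_lt hχpos hχuniq y hy.1.le hy.2
      linarith
    exact hanti (Set.mem_Icc.2 ⟨hx0, hlt.le⟩) (Set.mem_Icc.2 ⟨hχpos.le, le_refl _⟩) hlt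
  · have hmono : StrictMonoOn hfun (Set.Ici χs) := by
      apply strictMonoOn_of_deriv_pos (convex_Ici χs) hcont.continuousOn
      intro y hy
      rw [interior_Ici] at hy
      rw [hderiv]
      have := kfun_pos_of_gt hχpos hχuniq y hy
      linarith
    exact hmono (Set.mem_Ici.2 (le_refl _)) (Set.mem_Ici.2 hgt.le) hgt

end minim

lemma hfun_val {χs : ℝ}
    (hχeq : stdGaussianPDF χs = 2 * χs * (1 - stdGaussianCDF χs)) :
    hfun χs = 1 - 2 * χs * stdGaussianPDF χs := by
  unfold hfun
  linear_combination (-2 * χs) * hχeq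

noncomputable def Gfun (c : ℝ) : ℝ :=
  ∫ z, min (z ^ 2) ((c - z) ^ 2) * stdGaussianPDF z

lemma continuous_Gintegrand (c : ℝ) :
    Continuous (fun z => min (z ^ 2) ((c - z) ^ 2) * stdGaussianPDF z) := by
  apply Continuous.mul _ continuous_stdPDF
  exact ((continuous_id.pow 2).min ((continuous_const.sub continuous_id).pow 2))

lemma integrable_Gintegrand (c : ℝ) :
    Integrable (fun z => min (z ^ 2) ((c - z) ^ 2) * stdGaussianPDF z) := by
  apply integrable_sq_mul_stdPDF.mono (continuous_Gintegrand c).aestronglyMeasurable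
  filter_upwards with z
  rw [Real.norm_eq_abs, Real.norm_eq_abs,
    abs_of_nonneg (mul_nonneg (le_min (sq_nonneg _) (sq_nonneg _)) (stdPDF_pos z).le),
    abs_of_nonneg (mul_nonneg (sq_nonneg _) (stdPDF_pos z).le)]
  exact mul_le_mul_of_nonneg_right (min_le_left _ _) (stdPDF_pos z).le

lemma Gfun_neg (c : ℝ) : Gfun (-c) = Gfun c := by
  unfold Gfun
  rw [← integral_neg_eq_self (fun z => min (z ^ 2) ((c - z) ^ 2) * stdGaussianPDF z)]
  congr 1
  funext z
  rw [stdPDF_neg]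
  congr 2
  · ring_nf
  · ring_nf

lemma Gfun_eq (c : ℝ) (hc : 0 ≤ c) : Gfun c = hfun (c / 2) := by
  set χ := c / 2 with hχ
  have hc2 : c = 2 * χ := by rw [hχ]; ring
  have hsplit := intervalIntegral.integral_Iic_add_Ioi (b := χ)
    ((integrable_Gintegrand c).integrableOn) ((integrable_Gintegrand c).integrableOn)
  have hIic : ∫ z in Set.Iic χ, min (z ^ 2) ((c - z) ^ 2) * stdGaussianPDF z
      = ∫ z in Set.Iic χ, z ^ 2 * stdGaussianPDF z := by
    apply setIntegral_congr_fun measurableSet_Iic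
    intro z hz
    have hz' : z ≤ χ := hz
    have : z ^ 2 ≤ (c - z) ^ 2 := by nlinarith [hc2]
    show min (z ^ 2) ((c - z) ^ 2) * stdGaussianPDF z = z ^ 2 * stdGaussianPDF z
    rw [min_eq_left this]
  have hIoi : ∫ z in Set.Ioi χ, min (z ^ 2) ((c - z) ^ 2) * stdGaussianPDF z
      = ∫ z in Set.Ioi χ, (c - z) ^ 2 * stdGaussianPDF z := by
    apply setIntegral_congr_fun measurableSet_Ioi
    intro z hz
    have hz' : χ < z := hz
    have : (c - z) ^ 2 ≤ z ^ 2 := by nlinarith [hc2]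
    show min (z ^ 2) ((c - z) ^ 2) * stdGaussianPDF z = (c - z) ^ 2 * stdGaussianPDF z
    rw [min_eq_right this]
  have hexpand : ∫ z in Set.Ioi χ, (c - z) ^ 2 * stdGaussianPDF z
      = (∫ z in Set.Ioi χ, z ^ 2 * stdGaussianPDF z)
        - 2 * c * (∫ z in Set.Ioi χ, z * stdGaussianPDF z)
        + c ^ 2 * (∫ z in Set.Ioi χ, stdGaussianPDF z) := by
    rw [← integral_const_mul, ← integral_const_mul, ← integral_sub, ← integral_add]
    · apply setIntegral_congr_fun measurableSet_Ioi
      intro z _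
      ring
    · apply Integrable.sub
      · exact integrable_sq_mul_stdPDF.integrableOn
      · exact (integrable_id_mul_stdPDF.const_mul (2 * c)).integrableOn
    · exact (integrable_stdPDF.const_mul (c ^ 2)).integrableOn
    · exact integrable_sq_mul_stdPDF.integrableOn
    · exact (integrable_id_mul_stdPDF.const_mul (2 * c)).integrableOn
  have h1 := integral_Iic_sq_mul_stdPDF χ
  have h2 := integral_Ioi_sq_mul_stdPDF χ
  have h3 := integral_Ioi_id_mul_stdPDF χ
  have h4 : ∫ z in Set.Ioi χ, stdGaussianPDF z = 1 - stdGaussianCDF χ :=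
    (one_sub_stdCDF χ).symm
  unfold Gfun hfun
  rw [← hsplit, hIic, hIoi, hexpand, h1, h2, h3, h4, hc2]
  ring

lemma gaussian_eq_map (m σ : ℝ) (hσ : 0 < σ) :
    gaussianReal m ⟨σ ^ 2, sq_nonneg σ⟩
      = Measure.map (fun z => σ * z + m) (gaussianReal 0 1) := by
  have hcomp : (fun z : ℝ => σ * z + m) = (fun y => y + m) ∘ (fun z => σ * z) := rfl
  rw [hcomp, ← Measure.map_map (measurable_add_const m) (measurable_const_mul σ)]
  rw [show (fun z : ℝ => σ * z) = (σ * ·) from rfl, gaussianReal_map_const_mul σ]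
  rw [show (fun y : ℝ => y + m) = (· + m) from rfl, gaussianReal_map_add_const m]
  rw [mul_one, mul_zero, zero_add]
  rfl

lemma J_eq (m σ : ℝ) (hσ : 0 < σ) (b : ℝ) :
    ∫ x, min ((m - x) ^ 2) ((b - x) ^ 2) ∂(gaussianReal m ⟨σ ^ 2, sq_nonneg σ⟩)
      = σ ^ 2 * Gfun ((b - m) / σ) := by
  set c : ℝ := (b - m) / σ with hc
  have hσc : σ * c = b - m := by
    rw [hc]; field_simp
  have hfc : Continuous (fun x : ℝ => min ((m - x) ^ 2) ((b - x) ^ 2)) :=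
    ((continuous_const.sub continuous_id).pow 2).min ((continuous_const.sub continuous_id).pow 2)
  rw [gaussian_eq_map m σ hσ]
  rw [integral_map ((measurable_const_mul σ).add_const m).aemeasurable
    hfc.aestronglyMeasurable]
  rw [gaussianReal_of_var_ne_zero 0 one_ne_zero]
  have hpdf_eq : gaussianPDF 0 1 = fun x => ((gaussianPDFReal 0 1 x).toNNReal : ℝ≥0∞) := rfl
  rw [hpdf_eq, integral_withDensity_eq_integral_smul
    ((measurable_gaussianPDFReal 0 1).real_toNNReal)]
  have : ∀ z : ℝ, (gaussianPDFReal 0 1 z).toNNReal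
      • min ((m - (σ * z + m)) ^ 2) ((b - (σ * z + m)) ^ 2)
      = σ ^ 2 * (min (z ^ 2) ((c - z) ^ 2) * stdGaussianPDF z) := by
    intro z
    have h1 : (m - (σ * z + m)) ^ 2 = σ ^ 2 * z ^ 2 := by ring
    have h2 : (b - (σ * z + m)) ^ 2 = σ ^ 2 * (c - z) ^ 2 := by
      have : b - (σ * z + m) = σ * (c - z) := by rw [mul_sub, hσc]; ring
      rw [this]; ring
    have h3 : min (σ ^ 2 * z ^ 2) (σ ^ 2 * (c - z) ^ 2)
        = σ ^ 2 * min (z ^ 2) ((c - z) ^ 2) := by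
      rcases min_cases (z ^ 2) ((c - z) ^ 2) with ⟨h, hle⟩ | ⟨h, hle⟩
      · rw [h, min_eq_left (by nlinarith)]
      · rw [h, min_eq_right (by nlinarith)]
    rw [NNReal.smul_def, Real.coe_toNNReal _ (gaussianPDFReal_nonneg 0 1 z), smul_eq_mul,
      h1, h2, h3, ← stdPDF_eq_gaussianPDFReal]
    ring
  rw [integral_congr_ae (ae_of_all _ this), integral_const_mul]
  rfl

/-- **Optimal hierarchical estimator in the 1-D Gaussian case.**
Let `χ*` be the unique positive solution of `φ(χ) = 2χ(1 − Φ(χ))`. Then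
`b ↦ J(m, b)` attains its global minimum exactly at `b = m + 2χ*σ` and
`b = m − 2χ*σ`, the minimal value being `σ²(1 − 2χ*φ(χ*)) < σ²`. -/
theorem gaussian_hierarchical_optimal_1D
    (m σ : ℝ) (hσ : 0 < σ)
    (γ : Measure ℝ) (hγ : γ = gaussianReal m ⟨σ ^ 2, sq_nonneg σ⟩)
    (χs : ℝ) (hχpos : 0 < χs)
    (hχeq : stdGaussianPDF χs = 2 * χs * (1 - stdGaussianCDF χs))
    (hχuniq : ∀ χ : ℝ, 0 < χ →
      stdGaussianPDF χ = 2 * χ * (1 - stdGaussianCDF χ) → χ = χs) :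
    (∀ b : ℝ,
      ∫ x, min ((m - x) ^ 2) ((m + 2 * χs * σ - x) ^ 2) ∂γ ≤
        ∫ x, min ((m - x) ^ 2) ((b - x) ^ 2) ∂γ) ∧
    (∀ b : ℝ,
      ∫ x, min ((m - x) ^ 2) ((m - 2 * χs * σ - x) ^ 2) ∂γ ≤
        ∫ x, min ((m - x) ^ 2) ((b - x) ^ 2) ∂γ) ∧
    (∀ b : ℝ,
      (∀ b' : ℝ,
        ∫ x, min ((m - x) ^ 2) ((b - x) ^ 2) ∂γ ≤
          ∫ x, min ((m - x) ^ 2) ((b' - x) ^ 2) ∂γ) →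
      b = m + 2 * χs * σ ∨ b = m - 2 * χs * σ) ∧
    ∫ x, min ((m - x) ^ 2) ((m + 2 * χs * σ - x) ^ 2) ∂γ =
      σ ^ 2 * (1 - 2 * χs * stdGaussianPDF χs) ∧
    σ ^ 2 * (1 - 2 * χs * stdGaussianPDF χs) < σ ^ 2 := by
  subst hγ
  have hσ2 : (0:ℝ) < σ ^ 2 := by positivity
  have hJ : ∀ b : ℝ, ∫ x, min ((m - x) ^ 2) ((b - x) ^ 2)
      ∂(gaussianReal m ⟨σ ^ 2, sq_nonneg σ⟩) = σ ^ 2 * Gfun ((b - m) / σ) := J_eq m σ hσ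
  have habs : ∀ b : ℝ, Gfun ((b - m) / σ) = hfun (|(b - m) / σ| / 2) := by
    intro b
    rcases le_or_gt 0 ((b - m) / σ) with h | h
    · rw [Gfun_eq _ h, abs_of_nonneg h]
    · rw [← Gfun_neg, Gfun_eq _ (by linarith), abs_of_neg h]
  have hplus : (m + 2 * χs * σ - m) / σ = 2 * χs := by field_simp; ring
  have hminus : (m - 2 * χs * σ - m) / σ = -(2 * χs) := by field_simp; ring
  have habs2 : |(2 * χs : ℝ)| / 2 = χs := by
    rw [abs_of_pos (by linarith)]; ring
  have Fval_plus : ∫ x, min ((m - x) ^ 2) ((m + 2 * χs * σ - x) ^ 2)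
      ∂(gaussianReal m ⟨σ ^ 2, sq_nonneg σ⟩) = σ ^ 2 * hfun χs := by
    rw [hJ, habs, hplus, habs2]
  have Fval_minus : ∫ x, min ((m - x) ^ 2) ((m - 2 * χs * σ - x) ^ 2)
      ∂(gaussianReal m ⟨σ ^ 2, sq_nonneg σ⟩) = σ ^ 2 * hfun χs := by
    rw [hJ, habs, hminus, abs_neg, habs2]
  have hmin_le : ∀ b : ℝ, hfun χs ≤ hfun (|(b - m) / σ| / 2) := by
    intro b
    by_cases hne : |(b - m) / σ| / 2 = χs
    · rw [hne]
    · exact (hfun_strict_min hχpos hχuniq _ (by positivity) hne).le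
  refine ⟨?_, ?_, ?_, ?_, ?_⟩
  · intro b
    rw [Fval_plus, hJ b, habs b]
    exact mul_le_mul_of_nonneg_left (hmin_le b) hσ2.le
  · intro b
    rw [Fval_minus, hJ b, habs b]
    exact mul_le_mul_of_nonneg_left (hmin_le b) hσ2.le
  · intro b hb
    have h1 := hb (m + 2 * χs * σ)
    rw [hJ b, habs b, Fval_plus] at h1
    have h2 : hfun (|(b - m) / σ| / 2) ≤ hfun χs := le_of_mul_le_mul_left h1 hσ2
    have h3 : |(b - m) / σ| / 2 = χs := by
      by_contra hne
      exact absurd h2 (not_le.2 (hfun_strict_min hχpos hχuniq _ (by positivity) hne))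
    have h4 : |(b - m) / σ| = 2 * χs := by linarith
    rcases abs_eq (by linarith : (0:ℝ) ≤ 2 * χs) |>.1 h4 with h5 | h5
    · left
      have : b - m = 2 * χs * σ := by
        field_simp at h5; linarith
      linarith
    · right
      have : b - m = -(2 * χs) * σ := by
        field_simp at h5; linarith
      linarith
  · rw [Fval_plus, hfun_val hχeq]
  · have hpos : 0 < 2 * χs * stdGaussianPDF χs := by
      have := stdPDF_pos χs
      positivity
    nlinarith
end
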